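/- arXiv:1805.09694 — 2 statements merged into one kernel-verified Lean document; each statement's English description precedes it below -/
import Mathlib

section
/- Let a ∈ ℝ ∪ {−∞}, b ∈ ℝ ∪ {+∞} with a < b, and let c ≤ d be real numbers. Then the k-vector space Hom(k_{(a,b)}, k_{[c,d]}) is one-dimensional over k if (a,b) ∩ [c,d] ≠ ∅, and is zero otherwise. -/
open CategoryTheory TopologicalSpace Set Topology

noncomputable section

variable (k : Type) [Field k]

/-- The support of the function `s : V ∩ I → k` is closed in `V`. -/
def SuppClosedIn (I V : Set ℝ) (s : ↥(V ∩ I) → k) : Prop :=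
  ∀ x ∈ V, x ∈ closure {y : ℝ | ∃ h : y ∈ V ∩ I, s ⟨y, h⟩ ≠ 0} →
    ∃ h : x ∈ V ∩ I, s ⟨x, h⟩ ≠ 0

lemma zero_locConst (I V : Set ℝ) :
    IsLocallyConstant (0 : ↥(V ∩ I) → k) ∧ SuppClosedIn k I V 0 := by
  constructor
  · exact IsLocallyConstant.const 0
  · intro x _ hx
    exfalso
    have h0 : {y : ℝ | ∃ h : y ∈ V ∩ I, (0 : ↥(V ∩ I) → k) ⟨y, h⟩ ≠ 0} = ∅ := by
      ext y; simp
    rw [h0, closure_empty] at hx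
    exact hx

/-- The sections over `V` of the sheaf `k_I`: locally constant functions on `V ∩ I`
whose support is closed in `V`. -/
def secSub (I V : Set ℝ) : Submodule k (↥(V ∩ I) → k) where
  carrier := {s | IsLocallyConstant s ∧ SuppClosedIn k I V s}
  zero_mem' := zero_locConst k I V
  add_mem' := by
    rintro s t ⟨hslc, hscl⟩ ⟨htlc, htcl⟩
    have hlc : IsLocallyConstant (s + t) := hslc.comp₂ htlc (· + ·)
    refine ⟨hlc, ?_⟩
    intro x hxV hxcl
    have hsub : {y : ℝ | ∃ h : y ∈ V ∩ I, (s + t) ⟨y, h⟩ ≠ 0}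
        ⊆ {y : ℝ | ∃ h : y ∈ V ∩ I, s ⟨y, h⟩ ≠ 0}
          ∪ {y : ℝ | ∃ h : y ∈ V ∩ I, t ⟨y, h⟩ ≠ 0} := by
      rintro y ⟨h, hy⟩
      by_cases hsy : s ⟨y, h⟩ = 0
      · refine Or.inr ⟨h, fun h0 => hy ?_⟩
        show s ⟨y, h⟩ + t ⟨y, h⟩ = 0
        rw [hsy, h0, add_zero]
      · exact Or.inl ⟨h, hsy⟩
    have hxVI : x ∈ V ∩ I := by
      have hcl2 := closure_mono hsub hxcl
      rw [closure_union] at hcl2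
      rcases hcl2 with h | h
      · exact (hscl x hxV h).choose
      · exact (htcl x hxV h).choose
    refine ⟨hxVI, ?_⟩
    have hA : IsClosed {y : ↥(V ∩ I) | (s + t) y ≠ 0} := by
      have h1 : IsOpen ((s + t) ⁻¹' {0}) := hlc {0}
      have h2 := h1.isClosed_compl
      have h3 : ((s + t) ⁻¹' {0})ᶜ = {y : ↥(V ∩ I) | (s + t) y ≠ 0} := by
        ext y; simp
      exact h3 ▸ h2
    have hmem : (⟨x, hxVI⟩ : ↥(V ∩ I)) ∈ closure {y : ↥(V ∩ I) | (s + t) y ≠ 0} := by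
      rw [closure_subtype]
      have himg : Subtype.val '' {y : ↥(V ∩ I) | (s + t) y ≠ 0}
          = {y : ℝ | ∃ h : y ∈ V ∩ I, (s + t) ⟨y, h⟩ ≠ 0} := by
        ext y
        constructor
        · rintro ⟨z, hz, rfl⟩; exact ⟨z.2, hz⟩
        · rintro ⟨h, hy⟩; exact ⟨⟨y, h⟩, hy, rfl⟩
      rw [himg]
      exact hxcl
    have := hA.closure_eq ▸ hmem
    exact this
  smul_mem' := by
    intro c s hs
    rcases hs with ⟨hlc, hcl⟩
    by_cases hc : c = 0
    · subst hc
      rw [zero_smul]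
      exact zero_locConst k I V
    · constructor
      · exact hlc.comp (fun a => c • a)
      · intro x hxV hxcl
        have hset : {y : ℝ | ∃ h : y ∈ V ∩ I, (c • s) ⟨y, h⟩ ≠ 0}
            = {y : ℝ | ∃ h : y ∈ V ∩ I, s ⟨y, h⟩ ≠ 0} := by
          ext y
          constructor
          · rintro ⟨h, hy⟩
            refine ⟨h, fun h0 => hy ?_⟩
            show c • s ⟨y, h⟩ = 0
            rw [h0, smul_zero]
          · rintro ⟨h, hy⟩
            exact ⟨h, by simpa [smul_eq_zero, hc] using hy⟩
        rw [hset] at hxcl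
        obtain ⟨h, hy⟩ := hcl x hxV hxcl
        exact ⟨h, by simpa [smul_eq_zero, hc] using hy⟩
/-- Restriction of sections. -/
def resFun (I : Set ℝ) {V W : Set ℝ} (h : W ⊆ V) (s : ↥(V ∩ I) → k) : ↥(W ∩ I) → k :=
  fun y => s ⟨y.1, ⟨h y.2.1, y.2.2⟩⟩

lemma resFun_mem (I : Set ℝ) {V W : Set ℝ} (h : W ⊆ V) (s : ↥(V ∩ I) → k)
    (hs : s ∈ secSub k I V) : resFun k I h s ∈ secSub k I W := by
  obtain ⟨hlc, hcl⟩ := hs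
  constructor
  · exact hlc.comp_continuous (Continuous.subtype_mk continuous_subtype_val _)
  · intro x hxW hxcl
    have hsub : {y : ℝ | ∃ h' : y ∈ W ∩ I, resFun k I h s ⟨y, h'⟩ ≠ 0}
        ⊆ {y : ℝ | ∃ h' : y ∈ V ∩ I, s ⟨y, h'⟩ ≠ 0} := by
      rintro y ⟨h', hy⟩
      exact ⟨⟨h h'.1, h'.2⟩, hy⟩
    obtain ⟨hxVI, hne⟩ := hcl x (h hxW) (closure_mono hsub hxcl)
    exact ⟨⟨hxW, hxVI.2⟩, hne⟩

/-- Restriction as a linear map. -/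
def resLM (I : Set ℝ) {V W : Set ℝ} (h : W ⊆ V) : secSub k I V →ₗ[k] secSub k I W where
  toFun s := ⟨resFun k I h s.1, resFun_mem k I h s.1 s.2⟩
  map_add' s t := rfl
  map_smul' c s := rfl

/-- The presheaf `k_I` on `ℝ`. -/
def intervalPresheaf (I : Set ℝ) : TopCat.Presheaf (ModuleCat.{0} k) (TopCat.of ℝ) where
  obj V := ModuleCat.of k (secSub k I V.unop.1)
  map {V W} f := ModuleCat.ofHom (resLM k I (leOfHom f.unop))
  map_id V := rfl
  map_comp f g := rfl
theorem intervalPresheaf_isSheaf (I : Set ℝ) : (intervalPresheaf k I).IsSheaf := by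
  classical
  rw [TopCat.Presheaf.isSheaf_iff_isSheafUniqueGluing]
  intro ι U sf hcomp
  change ∀ i, secSub k I (U i).1 at sf
  -- pointwise compatibility
  have key : ∀ (i j : ι) (x : ℝ) (hxi : x ∈ (U i).1 ∩ I) (hxj : x ∈ (U j).1 ∩ I),
      (sf i).1 ⟨x, hxi⟩ = (sf j).1 ⟨x, hxj⟩ := by
    intro i j x hxi hxj
    have h := hcomp i j
    have hmem : x ∈ (U i ⊓ U j).1 ∩ I := ⟨⟨hxi.1, hxj.1⟩, hxi.2⟩
    have h2 := congrFun (congrArg Subtype.val h) ⟨x, hmem⟩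
    exact h2
  have hmemS : ∀ x : ↥((iSup U : Opens (TopCat.of ℝ)).1 ∩ I), ∃ i, x.1 ∈ U i := by
    intro x
    exact Opens.mem_iSup.mp x.2.1
  set idx : ↥((iSup U : Opens (TopCat.of ℝ)).1 ∩ I) → ι := fun x => (hmemS x).choose with hidxdef
  have hidx : ∀ x, x.1 ∈ U (idx x) := fun x => (hmemS x).choose_spec
  set s₀ : ↥((iSup U : Opens (TopCat.of ℝ)).1 ∩ I) → k :=
    fun x => (sf (idx x)).1 ⟨x.1, ⟨hidx x, x.2.2⟩⟩ with hs₀def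
  have hs₀ : ∀ (x : ↥((iSup U : Opens (TopCat.of ℝ)).1 ∩ I)) (i : ι) (hx : x.1 ∈ U i),
      s₀ x = (sf i).1 ⟨x.1, ⟨hx, x.2.2⟩⟩ :=
    fun x i hx => key (idx x) i x.1 ⟨hidx x, x.2.2⟩ ⟨hx, x.2.2⟩
  have hlc : IsLocallyConstant s₀ := by
    rw [IsLocallyConstant.iff_exists_open]
    intro x
    obtain ⟨i, hi⟩ := hmemS x
    have hlci : IsLocallyConstant ((sf i).1 : ↥((U i).1 ∩ I) → k) := (sf i).2.1
    obtain ⟨W, hWopen, hpW, hWconst⟩ := hlci.exists_open (⟨x.1, ⟨hi, x.2.2⟩⟩ : ↥((U i).1 ∩ I))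
    obtain ⟨O, hOopen, hWO⟩ := isOpen_induced_iff.mp hWopen
    subst hWO
    refine ⟨Subtype.val ⁻¹' (O ∩ (U i).1), (hOopen.inter (U i).2).preimage continuous_subtype_val,
      ⟨hpW, hi⟩, ?_⟩
    intro y hy
    have hyi : y.1 ∈ U i := hy.2
    rw [hs₀ y i hyi, hs₀ x i hi]
    exact hWconst ⟨y.1, ⟨hyi, y.2.2⟩⟩ hy.1
  have hscl : SuppClosedIn k I (iSup U : Opens (TopCat.of ℝ)).1 s₀ := by
    intro x hxS hxcl
    obtain ⟨i, hi⟩ := Opens.mem_iSup.mp hxS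
    have h1 : x ∈ closure ({y : ℝ | ∃ h : y ∈ (iSup U : Opens (TopCat.of ℝ)).1 ∩ I, s₀ ⟨y, h⟩ ≠ 0}
        ∩ (U i).1) := by
      rw [mem_closure_iff] at hxcl ⊢
      intro O hO hxO
      obtain ⟨z, hz⟩ := hxcl (O ∩ (U i).1) (hO.inter (U i).2) ⟨hxO, hi⟩
      exact ⟨z, hz.1.1, hz.2, hz.1.2⟩
    have hsub : {y : ℝ | ∃ h : y ∈ (iSup U : Opens (TopCat.of ℝ)).1 ∩ I, s₀ ⟨y, h⟩ ≠ 0}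
        ∩ (U i).1 ⊆ {y : ℝ | ∃ h : y ∈ (U i).1 ∩ I, (sf i).1 ⟨y, h⟩ ≠ 0} := by
      rintro y ⟨⟨hy, hne⟩, hyi⟩
      refine ⟨⟨hyi, hy.2⟩, ?_⟩
      rw [← hs₀ ⟨y, hy⟩ i hyi]
      exact hne
    obtain ⟨hyUI, hne⟩ := (sf i).2.2 x hi (closure_mono hsub h1)
    refine ⟨⟨hxS, hyUI.2⟩, ?_⟩
    rw [hs₀ ⟨x, ⟨hxS, hyUI.2⟩⟩ i hyUI.1]
    exact hne
  refine ⟨(⟨s₀, hlc, hscl⟩ : secSub k I (iSup U : Opens (TopCat.of ℝ)).1), ?_, ?_⟩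
  · intro i
    apply Subtype.ext
    funext y
    exact hs₀ ⟨y.1, ⟨leOfHom (Opens.leSupr U i) y.2.1, y.2.2⟩⟩ i y.2.1
  · intro t ht
    apply Subtype.ext
    funext x
    have h := ht (idx x)
    have h2 := congrFun (congrArg Subtype.val h) ⟨x.1, ⟨hidx x, x.2.2⟩⟩
    exact h2

/-- The sheaf `k_I` on `ℝ` for an interval `I`: locally constant functions on `V ∩ I`
whose support is closed in `V`. -/
def intervalSheaf (I : Set ℝ) :
    Sheaf (Opens.grothendieckTopology (TopCat.of ℝ)) (ModuleCat.{0} k) :=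
  ⟨intervalPresheaf k I, intervalPresheaf_isSheaf k I⟩
/-- The category of sheaves of `k`-vector spaces on `ℝ`. -/
abbrev RealSheafCat := Sheaf (Opens.grothendieckTopology (TopCat.of ℝ)) (ModuleCat.{0} k)

instance sheafHomSMul (F G : RealSheafCat k) : SMul k (F ⟶ G) :=
  ⟨fun c f => ⟨c • f.hom⟩⟩

instance sheafHomModule (F G : RealSheafCat k) : Module k (F ⟶ G) :=
  Function.Injective.module k
    { toFun := fun f : F ⟶ G => f.hom
      map_zero' := rfl
      map_add' := fun _ _ => rfl }
    (fun _ _ h => Sheaf.hom_ext h) (fun _ _ => rfl)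

instance : HasExt.{1} (RealSheafCat k) := by
  letI := HasDerivedCategory.standard (RealSheafCat k)
  exact hasExt_of_hasDerivedCategory _

/-- The interval `(a, b)` with possibly infinite endpoints. -/
def Ioo' (a b : EReal) : Set ℝ := {x : ℝ | a < (x : EReal) ∧ (x : EReal) < b}

/-- The interval `[a, b)` with a possibly infinite right endpoint. -/
def Ico' (a : ℝ) (b : EReal) : Set ℝ := {x : ℝ | a ≤ x ∧ (x : EReal) < b}

/-- The interval `(a, b]` with a possibly infinite left endpoint. -/
def Ioc' (a : EReal) (b : ℝ) : Set ℝ := {x : ℝ | a < (x : EReal) ∧ x ≤ b}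

/-- Identification of sheaves on the topological space `ℝ` with objects of `RealSheafCat`. -/
def toRS (F : TopCat.Sheaf (ModuleCat.{0} k) (TopCat.of ℝ)) : RealSheafCat k := F


/-! ### Auxiliary development for `hom_open_compact` -/

/-- Constant-one section of `k_U` over an open `W ⊆ U`. -/
def oneSec (U W : Set ℝ) (hWU : W ⊆ U) : secSub k U W :=
  ⟨fun _ => (1 : k), IsLocallyConstant.const 1,
    fun x hxW _ => ⟨⟨hxW, hWU hxW⟩, one_ne_zero⟩⟩

lemma nat_app {U Z : Set ℝ} (f : intervalSheaf k U ⟶ intervalSheaf k Z)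
    {W V : Opens (TopCat.of ℝ)} (h : W ≤ V) (s : secSub k U V.1) :
    f.hom.app (Opposite.op W) ((intervalPresheaf k U).map (homOfLE h).op s)
      = (intervalPresheaf k Z).map (homOfLE h).op (f.hom.app (Opposite.op V) s) := by
  have h2 := ConcreteCategory.congr_hom (f.hom.naturality (homOfLE h).op) s
  exact h2

/-- A morphism `k_U → k_Z` kills germs at points outside `U`. -/
lemma vanish_lemma {U Z : Set ℝ} (f : intervalSheaf k U ⟶ intervalSheaf k Z)
    (V : Opens (TopCat.of ℝ)) (s : secSub k U V.1) {x : ℝ}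
    (hx : x ∈ V.1 ∩ Z) (hxU : x ∉ U) :
    (f.hom.app (Opposite.op V) s).1 ⟨x, hx⟩ = 0 := by
  have hxc : x ∉ closure {y : ℝ | ∃ h : y ∈ V.1 ∩ U, s.1 ⟨y, h⟩ ≠ 0} := by
    intro h
    exact hxU (s.2.2 x hx.1 h).choose.2
  set W : Opens (TopCat.of ℝ) :=
    ⟨(closure {y : ℝ | ∃ h : y ∈ V.1 ∩ U, s.1 ⟨y, h⟩ ≠ 0})ᶜ ∩ V.1,
      (isClosed_closure.isOpen_compl).inter V.2⟩ with hWdef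
  have hWV : W ≤ V := fun y hy => hy.2
  have hres : (intervalPresheaf k U).map (homOfLE hWV).op s = 0 := by
    apply Subtype.ext
    funext y
    by_contra hne
    exact y.2.1.1 (subset_closure ⟨⟨y.2.1.2, y.2.2⟩, hne⟩)
  have h2 := nat_app k f hWV s
  rw [hres] at h2
  erw [map_zero] at h2
  have h3 := congrFun (congrArg Subtype.val h2.symm)
    ⟨x, ⟨⟨hxc, hx.1⟩, hx.2⟩⟩
  exact h3

/-- A morphism `k_U → k_Z` acts on germs at points of `U` by a scalar determined by the
image of the constant section `1` over `U`. -/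
lemma smul_lemma {U Z : Set ℝ} (hU : IsOpen U) (f : intervalSheaf k U ⟶ intervalSheaf k Z)
    (V : Opens (TopCat.of ℝ)) (s : secSub k U V.1) {x : ℝ}
    (hx : x ∈ V.1 ∩ Z) (hxU : x ∈ U) :
    (f.hom.app (Opposite.op V) s).1 ⟨x, hx⟩
      = s.1 ⟨x, ⟨hx.1, hxU⟩⟩ •
        (f.hom.app (Opposite.op ⟨U, hU⟩) (oneSec k U U subset_rfl)).1 ⟨x, ⟨hxU, hx.2⟩⟩ := by
  obtain ⟨T, hTopen, hmemT, hconst⟩ := s.2.1.exists_open (⟨x, ⟨hx.1, hxU⟩⟩ : ↥(V.1 ∩ U))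
  obtain ⟨O, hO, rfl⟩ := isOpen_induced_iff.mp hTopen
  set W : Opens (TopCat.of ℝ) := ⟨O ∩ V.1 ∩ U, (hO.inter V.2).inter hU⟩ with hWdef
  have hWV : W ≤ V := fun y hy => hy.1.2
  have hWU : W ≤ (⟨U, hU⟩ : Opens (TopCat.of ℝ)) := fun y hy => hy.2
  have hxW : x ∈ W.1 := ⟨⟨hmemT, hx.1⟩, hxU⟩
  -- restriction of `s` to `W` is the constant `s x`
  have hres : (intervalPresheaf k U).map (homOfLE hWV).op s
      = s.1 ⟨x, ⟨hx.1, hxU⟩⟩ • oneSec k U W.1 hWU := by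
    apply Subtype.ext
    funext y
    have := hconst ⟨y.1, ⟨y.2.1.1.2, y.2.2⟩⟩ y.2.1.1.1
    show s.1 ⟨y.1, ⟨y.2.1.1.2, y.2.2⟩⟩ = s.1 ⟨x, ⟨hx.1, hxU⟩⟩ • (1 : k)
    rw [this, smul_eq_mul, mul_one]
  have hone : (intervalPresheaf k U).map (homOfLE hWU).op (oneSec k U U subset_rfl)
      = oneSec k U W.1 hWU := rfl
  have h1 := nat_app k f hWV s
  have h2 := nat_app k f hWU (oneSec k U U subset_rfl)
  rw [hres] at h1
  erw [map_smul] at h1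
  rw [hone] at h2
  rw [h2] at h1
  have h3 := congrFun (congrArg Subtype.val h1.symm) ⟨x, ⟨hxW, hx.2⟩⟩
  exact h3

open Classical in
/-- Extension by zero of a section of `k_U` to a section of `k_Z`. -/
def extFun (U Z V : Set ℝ) (s : ↥(V ∩ U) → k) : ↥(V ∩ Z) → k :=
  fun y => if h : y.1 ∈ U then s ⟨y.1, ⟨y.2.1, h⟩⟩ else 0

lemma extFun_mem {U Z V : Set ℝ} (hU : IsOpen U) (hZ : IsClosed Z) (s : secSub k U V) :
    extFun k U Z V s.1 ∈ secSub k Z V := by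
  constructor
  · rw [IsLocallyConstant.iff_exists_open]
    intro y
    by_cases hy : y.1 ∈ U
    · obtain ⟨T, hTopen, hmemT, hconst⟩ := s.2.1.exists_open (⟨y.1, ⟨y.2.1, hy⟩⟩ : ↥(V ∩ U))
      obtain ⟨O, hO, rfl⟩ := isOpen_induced_iff.mp hTopen
      refine ⟨Subtype.val ⁻¹' (O ∩ U),
        ((hO.inter hU).preimage continuous_subtype_val), ⟨hmemT, hy⟩, ?_⟩
      intro z hz
      show extFun k U Z V s.1 z = extFun k U Z V s.1 y
      simp only [extFun]
      rw [dif_pos hz.2, dif_pos hy]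
      exact hconst ⟨z.1, ⟨z.2.1, hz.2⟩⟩ hz.1
    · have hyc : y.1 ∉ closure {w : ℝ | ∃ h : w ∈ V ∩ U, s.1 ⟨w, h⟩ ≠ 0} := by
        intro h
        exact hy (s.2.2 y.1 y.2.1 h).choose.2
      refine ⟨Subtype.val ⁻¹' (closure {w : ℝ | ∃ h : w ∈ V ∩ U, s.1 ⟨w, h⟩ ≠ 0})ᶜ,
        (isClosed_closure.isOpen_compl).preimage continuous_subtype_val, hyc, ?_⟩
      intro z hz
      show extFun k U Z V s.1 z = extFun k U Z V s.1 y
      simp only [extFun]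
      rw [dif_neg hy]
      by_cases hzU : z.1 ∈ U
      · rw [dif_pos hzU]
        by_contra hne
        exact hz (subset_closure ⟨⟨z.2.1, hzU⟩, hne⟩)
      · rw [dif_neg hzU]
  · intro x hxV hxcl
    have hsub : {y : ℝ | ∃ h : y ∈ V ∩ Z, extFun k U Z V s.1 ⟨y, h⟩ ≠ 0}
        ⊆ {y : ℝ | ∃ h : y ∈ V ∩ U, s.1 ⟨y, h⟩ ≠ 0} ∩ Z := by
      rintro y ⟨h, hy⟩
      by_cases hyU : y ∈ U
      · refine ⟨⟨⟨h.1, hyU⟩, ?_⟩, h.2⟩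
        simp only [extFun] at hy
        rw [dif_pos hyU] at hy
        exact hy
      · exact absurd (by simp [extFun, hyU]) hy
    have hxcl2 : x ∈ closure {y : ℝ | ∃ h : y ∈ V ∩ U, s.1 ⟨y, h⟩ ≠ 0} :=
      closure_mono (hsub.trans inter_subset_left) hxcl
    have hxZ : x ∈ Z :=
      hZ.closure_subset_iff.mpr subset_rfl (closure_mono (hsub.trans inter_subset_right) hxcl)
    obtain ⟨hmem, hne⟩ := s.2.2 x hxV hxcl2
    refine ⟨⟨hxV, hxZ⟩, ?_⟩
    simp only [extFun]
    rw [dif_pos hmem.2]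
    exact hne

/-- Extension by zero as a linear map on sections. -/
def extLM (U Z : Set ℝ) (hU : IsOpen U) (hZ : IsClosed Z) (V : Set ℝ) :
    secSub k U V →ₗ[k] secSub k Z V where
  toFun s := ⟨extFun k U Z V s.1, extFun_mem k hU hZ s⟩
  map_add' s t := by
    apply Subtype.ext
    funext y
    show extFun k U Z V (s.1 + t.1) y = extFun k U Z V s.1 y + extFun k U Z V t.1 y
    by_cases h : y.1 ∈ U <;> simp [extFun, h]
  map_smul' c s := by
    apply Subtype.ext
    funext y
    show extFun k U Z V (c • s.1) y = c • extFun k U Z V s.1 y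
    by_cases h : y.1 ∈ U <;> simp [extFun, h]

/-- The canonical nonzero morphism `k_U → k_Z`. -/
def phi (U Z : Set ℝ) (hU : IsOpen U) (hZ : IsClosed Z) :
    intervalSheaf k U ⟶ intervalSheaf k Z :=
  ⟨{ app := fun V => ModuleCat.ofHom (extLM k U Z hU hZ V.unop.1)
     naturality := by
       intro V W g
       apply ModuleCat.hom_ext
       apply LinearMap.ext
       intro s
       apply Subtype.ext
       funext y
       rfl }⟩

/-- Evaluation of a morphism `k_U → k_Z` at a point `x₀ ∈ U ∩ Z`, as a linear map. -/
def evLM (U Z : Set ℝ) (hU : IsOpen U) (x₀ : ℝ) (h₀ : x₀ ∈ U ∩ Z) :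
    (intervalSheaf k U ⟶ intervalSheaf k Z) →ₗ[k] k where
  toFun f := (f.hom.app (Opposite.op ⟨U, hU⟩) (oneSec k U U subset_rfl)).1 ⟨x₀, h₀⟩
  map_add' f g := by
    show (((f + g).hom.app (Opposite.op ⟨U, hU⟩)) (oneSec k U U subset_rfl)).1 ⟨x₀, h₀⟩ = _
    rw [Sheaf.Hom.add_app]
    rfl
  map_smul' c f := by
    show (((c • f).hom.app (Opposite.op ⟨U, hU⟩)) (oneSec k U U subset_rfl)).1 ⟨x₀, h₀⟩ = _
    have h1 : (c • f).hom = c • f.hom := rfl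
    rw [h1, NatTrans.app_smul]
    rfl

lemma ev_phi (U Z : Set ℝ) (hU : IsOpen U) (hZ : IsClosed Z) (x₀ : ℝ) (h₀ : x₀ ∈ U ∩ Z) :
    evLM k U Z hU x₀ h₀ (phi k U Z hU hZ) = 1 := by
  show extFun k U Z U (oneSec k U U subset_rfl).1 ⟨x₀, h₀⟩ = 1
  simp [extFun, h₀.1, oneSec]

/-- For `a ∈ ℝ ∪ {−∞}`, `b ∈ ℝ ∪ {+∞}` with `a < b` and real numbers `c ≤ d`,
the space `Hom(k_{(a,b)}, k_{[c,d]})` is one-dimensional over `k` if `(a,b) ∩ [c,d] ≠ ∅`,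
and is zero otherwise. -/
theorem hom_open_compact (k : Type) [Field k] (a b : EReal) (hab : a < b)
    (c d : ℝ) (hcd : c ≤ d) :
    ((Ioo' a b ∩ Set.Icc c d).Nonempty →
      Module.rank k (intervalSheaf k (Ioo' a b) ⟶ intervalSheaf k (Set.Icc c d)) = 1) ∧
    (¬ (Ioo' a b ∩ Set.Icc c d).Nonempty →
      ∀ f : intervalSheaf k (Ioo' a b) ⟶ intervalSheaf k (Set.Icc c d), f = 0) := by
  have hU : IsOpen (Ioo' a b) := by
    have h1 : Ioo' a b = Real.toEReal ⁻¹' (Set.Ioo a b) := rfl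
    rw [h1]
    exact isOpen_Ioo.preimage continuous_coe_real_ereal
  have hZ : IsClosed (Set.Icc c d) := isClosed_Icc
  set U := Ioo' a b with hUdef
  set Z := Set.Icc c d with hZdef
  -- a morphism vanishing at one point of `U ∩ Z` is zero
  have key : ∀ (x₀ : ℝ) (h₀ : x₀ ∈ U ∩ Z),
      IsPreconnected (U ∩ Z) →
      ∀ f : intervalSheaf k U ⟶ intervalSheaf k Z,
        evLM k U Z hU x₀ h₀ f = 0 → f = 0 := by
    intro x₀ h₀ hconn f hf
    haveI : PreconnectedSpace ↥(U ∩ Z) := isPreconnected_iff_preconnectedSpace.mp hconn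
    have hconst : ∀ y : ↥(U ∩ Z),
        (f.hom.app (Opposite.op ⟨U, hU⟩) (oneSec k U U subset_rfl)).1 y = 0 := by
      intro y
      have := (f.hom.app (Opposite.op ⟨U, hU⟩)
          (oneSec k U U subset_rfl)).2.1.apply_eq_of_isPreconnected
        isPreconnected_univ (Set.mem_univ y) (Set.mem_univ (⟨x₀, h₀⟩ : ↥(U ∩ Z)))
      rw [this]
      exact hf
    apply Sheaf.hom_ext
    apply NatTrans.ext
    funext V
    apply ModuleCat.hom_ext
    apply LinearMap.ext
    intro s
    apply Subtype.ext
    funext y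
    show (f.hom.app V s).1 y = 0
    by_cases hyU : y.1 ∈ U
    · exact (smul_lemma k hU f V.unop s y.2 hyU).trans (by rw [hconst, smul_zero])
    · exact vanish_lemma k f V.unop s y.2 hyU
  constructor
  · rintro ⟨x₀, h₀⟩
    have hconn : IsPreconnected (U ∩ Z) := by
      apply Set.OrdConnected.isPreconnected
      constructor
      intro p hp q hq z hz
      refine ⟨⟨?_, ?_⟩, le_trans hp.2.1 hz.1, le_trans hz.2 hq.2.2⟩
      · exact lt_of_lt_of_le hp.1.1 (EReal.coe_le_coe_iff.mpr hz.1)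
      · exact lt_of_le_of_lt (EReal.coe_le_coe_iff.mpr hz.2) hq.1.2
    have hbij : Function.Bijective (evLM k U Z hU x₀ h₀) := by
      constructor
      · intro f g hfg
        have h1 : evLM k U Z hU x₀ h₀ (f - g) = 0 := by
          rw [map_sub, hfg, sub_self]
        have := key x₀ h₀ hconn (f - g) h1
        exact sub_eq_zero.mp this
      · intro r
        refine ⟨r • phi k U Z hU hZ, ?_⟩
        rw [map_smul, ev_phi, smul_eq_mul, mul_one]
    exact ((LinearEquiv.ofBijective _ hbij).rank_eq).trans (Module.rank_self k)
  · intro hempty f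
    apply Sheaf.hom_ext
    apply NatTrans.ext
    funext V
    apply ModuleCat.hom_ext
    apply LinearMap.ext
    intro s
    apply Subtype.ext
    funext y
    show (f.hom.app V s).1 y = 0
    have hyU : y.1 ∉ U := fun h => hempty ⟨y.1, h, y.2.2⟩
    exact vanish_lemma k f V.unop s y.2 hyU

end
end

section
/- For every nonempty interval I ⊆ ℝ there exist a locally finite family ((a_α, b_α))_{α ∈ A} of bounded open intervals of ℝ and an epimorphism ⊕_{α ∈ A} k_{(a_α,b_α)} → k_I in the category of sheaves of k-vector spaces on ℝ. -/
open CategoryTheory TopologicalSpace Set Topology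

noncomputable section

variable (k : Type) [Field k]

section EpiConstruction

open CategoryTheory.Limits Classical in
/-- The map on sections `k_J(V) -> k_I(V)`: restrict to `J ∩ I` and extend by zero. -/
def goodFun (I J V : Set ℝ) (s : ↥(V ∩ J) → k) : ↥(V ∩ I) → k :=
  fun x => if h : x.1 ∈ J then s ⟨x.1, ⟨x.2.1, h⟩⟩ else 0

lemma goodFun_mem (I J V : Set ℝ) (hJ : IsOpen J) (hgood : J ∩ closure I ⊆ I)
    (s : ↥(V ∩ J) → k) (hs : s ∈ secSub k J V) : goodFun k I J V s ∈ secSub k I V := by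
  obtain ⟨hlc, hcl⟩ := hs
  have hsub : {y : ℝ | ∃ h : y ∈ V ∩ I, goodFun k I J V s ⟨y, h⟩ ≠ 0}
      ⊆ {y : ℝ | ∃ h : y ∈ V ∩ J, s ⟨y, h⟩ ≠ 0} := by
    rintro y ⟨h, hy⟩
    by_cases hyJ : y ∈ J
    · refine ⟨⟨h.1, hyJ⟩, fun h0 => hy ?_⟩
      simpa [goodFun, hyJ] using h0
    · exact absurd (by simp [goodFun, hyJ]) hy
  constructor
  · rw [IsLocallyConstant.iff_exists_open]
    intro x
    by_cases hxJ : x.1 ∈ J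
    · obtain ⟨W, hWopen, hpW, hWconst⟩ := hlc.exists_open (⟨x.1, ⟨x.2.1, hxJ⟩⟩ : ↥(V ∩ J))
      obtain ⟨O, hOopen, hWO⟩ := isOpen_induced_iff.mp hWopen
      subst hWO
      refine ⟨Subtype.val ⁻¹' (O ∩ J), (hOopen.inter hJ).preimage continuous_subtype_val,
        ⟨hpW, hxJ⟩, ?_⟩
      intro y hy
      have h1 : goodFun k I J V s y = s ⟨y.1, ⟨y.2.1, hy.2⟩⟩ := dif_pos hy.2
      have h2 : goodFun k I J V s x = s ⟨x.1, ⟨x.2.1, hxJ⟩⟩ := dif_pos hxJ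
      rw [h1, h2]
      exact hWconst ⟨y.1, ⟨y.2.1, hy.2⟩⟩ hy.1
    · have hxncl : x.1 ∉ closure {y : ℝ | ∃ h : y ∈ V ∩ J, s ⟨y, h⟩ ≠ 0} := by
        intro hmem
        exact hxJ (hcl x.1 x.2.1 hmem).choose.2
      refine ⟨Subtype.val ⁻¹' (closure {y : ℝ | ∃ h : y ∈ V ∩ J, s ⟨y, h⟩ ≠ 0})ᶜ,
        (isClosed_closure.isOpen_compl).preimage continuous_subtype_val, hxncl, ?_⟩
      intro y hy
      have h2 : goodFun k I J V s x = 0 := dif_neg hxJ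
      rw [h2]
      by_cases hyJ : y.1 ∈ J
      · have h1 : goodFun k I J V s y = s ⟨y.1, ⟨y.2.1, hyJ⟩⟩ := dif_pos hyJ
        rw [h1]
        by_contra hne
        exact hy (subset_closure ⟨⟨y.2.1, hyJ⟩, hne⟩)
      · exact dif_neg hyJ
  · intro x hxV hxcl
    have hxcl2 : x ∈ closure {y : ℝ | ∃ h : y ∈ V ∩ J, s ⟨y, h⟩ ≠ 0} :=
      closure_mono hsub hxcl
    obtain ⟨hxVJ, hne⟩ := hcl x hxV hxcl2
    have hxI : x ∈ I := by
      have hxclI : x ∈ closure I := by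
        refine closure_mono ?_ hxcl
        rintro y ⟨h, -⟩
        exact h.2
      exact hgood ⟨hxVJ.2, hxclI⟩
    refine ⟨⟨hxV, hxI⟩, ?_⟩
    have h1 : goodFun k I J V s ⟨x, ⟨hxV, hxI⟩⟩ = s ⟨x, hxVJ⟩ := by
      exact dif_pos hxVJ.2
    rw [h1]
    exact hne

/-- `goodFun` as a linear map between section spaces. -/
def goodLM (I J V : Set ℝ) (hJ : IsOpen J) (hgood : J ∩ closure I ⊆ I) :
    secSub k J V →ₗ[k] secSub k I V where
  toFun s := ⟨goodFun k I J V s.1, goodFun_mem k I J V hJ hgood s.1 s.2⟩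
  map_add' s t := by
    apply Subtype.ext; funext x
    show goodFun k I J V (s.1 + t.1) x = goodFun k I J V s.1 x + goodFun k I J V t.1 x
    by_cases h : x.1 ∈ J
    · simp only [goodFun, dif_pos h]; rfl
    · simp only [goodFun, dif_neg h, add_zero]
  map_smul' c s := by
    apply Subtype.ext; funext x
    show goodFun k I J V (c • s.1) x = c • goodFun k I J V s.1 x
    by_cases h : x.1 ∈ J
    · simp only [goodFun, dif_pos h]; rfl
    · simp only [goodFun, dif_neg h, smul_zero]

/-- The morphism of sheaves `k_J ⟶ k_I` for `J` open with `J ∩ closure I ⊆ I`. -/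
def goodHom (I J : Set ℝ) (hJ : IsOpen J) (hgood : J ∩ closure I ⊆ I) :
    intervalSheaf k J ⟶ intervalSheaf k I :=
  ⟨{ app := fun V => ModuleCat.ofHom (goodLM k I J V.unop.1 hJ hgood)
     naturality := fun V W f => rfl }⟩

/-- The constant section of `k_J` over an open set contained in `J`. -/
def constSec (J W : Set ℝ) (hWJ : W ⊆ J) (c : k) : ↥(secSub k J W) := by
  refine ⟨fun _ => c, IsLocallyConstant.const c, ?_⟩
  intro x hxW hx
  by_cases hc : c = 0
  · exfalso
    have h0 : {y : ℝ | ∃ h : y ∈ W ∩ J, (fun _ => c : ↥(W ∩ J) → k) ⟨y, h⟩ ≠ 0} = ∅ := by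
      ext y; simp [hc]
    rw [h0, closure_empty] at hx
    exact hx
  · exact ⟨⟨hxW, hWJ hxW⟩, hc⟩

set_option synthInstance.maxHeartbeats 400000 in
set_option maxHeartbeats 2000000 in
open CategoryTheory.Limits in
lemma exists_epi_of_cover (I : Set ℝ) (A : Type) (a b : A → ℝ)
    (hcov : ∀ x ∈ I, ∃ α, x ∈ Set.Ioo (a α) (b α) ∧ Set.Ioo (a α) (b α) ∩ closure I ⊆ I) :
    ∃ φ : (∐ fun α : A => intervalSheaf k (Set.Ioo (a α) (b α))) ⟶ intervalSheaf k I,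
      Epi φ := by
  classical
  set F : A → RealSheafCat k := fun α => intervalSheaf k (Set.Ioo (a α) (b α)) with hF
  set ψ : ∀ α, F α ⟶ intervalSheaf k I := fun α =>
    if h : Set.Ioo (a α) (b α) ∩ closure I ⊆ I then
      goodHom k I (Set.Ioo (a α) (b α)) isOpen_Ioo h else 0 with hψ
  refine ⟨Sigma.desc ψ, ?_⟩
  have hls : Sheaf.IsLocallySurjective (Limits.Sigma.desc ψ) := by
    constructor
    intro U t x hxU
    set S := {y : ℝ | ∃ h : y ∈ U.1 ∩ I, t.1 ⟨y, h⟩ ≠ 0} with hS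
    by_cases hx : x ∈ closure S
    · obtain ⟨hxUI, hnex⟩ := t.2.2 x hxU hx
      obtain ⟨α, hα, hgood⟩ := hcov x hxUI.2
      obtain ⟨W', hW'open, hpW', hW'const⟩ := t.2.1.exists_open (⟨x, hxUI⟩ : ↥(U.1 ∩ I))
      obtain ⟨O, hOopen, hWO⟩ := isOpen_induced_iff.mp hW'open
      subst hWO
      set c : k := t.1 ⟨x, hxUI⟩ with hc
      set W : Opens (TopCat.of ℝ) :=
        U ⊓ ⟨(O ∩ Set.Ioo (a α) (b α) : Set ℝ), hOopen.inter isOpen_Ioo⟩ with hW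
      have hWsub : ∀ y, y ∈ W.1 → y ∈ Set.Ioo (a α) (b α) := fun y hy => hy.2.2
      set s₀ : ↥(secSub k (Set.Ioo (a α) (b α)) W.1) := constSec k _ W.1 hWsub c with hs₀
      refine ⟨W, homOfLE inf_le_left, ⟨(Sigma.ι F α).hom.app (Opposite.op W) s₀, ?_⟩, ⟨hxU, hpW', hα⟩⟩
      have hfac : (Sigma.desc ψ).hom.app (Opposite.op W) ((Sigma.ι F α).hom.app (Opposite.op W) s₀)
          = (ψ α).hom.app (Opposite.op W) s₀ := by
        have h1 : Sigma.ι F α ≫ Sigma.desc ψ = ψ α := Sigma.ι_desc _ _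
        exact congrArg (fun (g : F α ⟶ intervalSheaf k I) => g.hom.app (Opposite.op W) s₀) h1
      refine hfac.trans ?_
      have hψα : ψ α = goodHom k I (Set.Ioo (a α) (b α)) isOpen_Ioo hgood := dif_pos hgood
      rw [hψα]
      apply Subtype.ext; funext y
      have hyIoo : y.1 ∈ Set.Ioo (a α) (b α) := y.2.1.2.2
      have hL : ((goodHom k I (Set.Ioo (a α) (b α)) isOpen_Ioo hgood).hom.app (Opposite.op W) s₀).1 y
          = c := dif_pos hyIoo
      rw [hL]
      exact (hW'const ⟨y.1, ⟨y.2.1.1, y.2.2⟩⟩ y.2.1.2.1).symm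
    · set W : Opens (TopCat.of ℝ) := U ⊓ ⟨(closure S)ᶜ, isClosed_closure.isOpen_compl⟩ with hW
      refine ⟨W, homOfLE inf_le_left, ⟨0, ?_⟩, ⟨hxU, hx⟩⟩
      rw [map_zero]
      apply Subtype.ext; funext y
      show (0 : k) = t.1 ⟨y.1, ⟨y.2.1.1, y.2.2⟩⟩
      by_contra hne
      exact y.2.1.2 (subset_closure ⟨⟨y.2.1.1, y.2.2⟩, fun h => hne h.symm⟩)
  exact Sheaf.epi_of_isLocallySurjective _

lemma mem_of_between (I : Set ℝ) (hI : I.OrdConnected) {y : ℝ}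
    (h1 : ∃ p ∈ I, p < y) (h2 : ∃ q ∈ I, y < q) : y ∈ I := by
  obtain ⟨p, hp, hpy⟩ := h1
  obtain ⟨q, hq, hyq⟩ := h2
  exact hI.out hp hq ⟨hpy.le, hyq.le⟩

end EpiConstruction

set_option synthInstance.maxHeartbeats 400000 in
set_option maxHeartbeats 2000000 in
open CategoryTheory.Limits in
/-- For every nonempty interval `I ⊆ ℝ` there is a locally finite family of
bounded open intervals `(a_α, b_α)` and an epimorphism `⊕_α k_{(a_α,b_α)} → k_I` in the
category of sheaves of `k`-vector spaces on `ℝ`. -/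
theorem epi_from_coproduct_of_opens (k : Type) [Field k]
    (I : Set ℝ) (hne : I.Nonempty) (hI : I.OrdConnected) :
    ∃ (A : Type) (a b : A → ℝ), (∀ α, a α < b α) ∧
      (∀ K : Set ℝ, IsCompact K → {α | (Set.Ioo (a α) (b α) ∩ K).Nonempty}.Finite) ∧
      ∃ φ : (∐ fun α : A => intervalSheaf k (Set.Ioo (a α) (b α))) ⟶ intervalSheaf k I,
        Epi φ := by
  classical
  obtain ⟨x₀, hx₀⟩ := hne
  by_cases hba : BddAbove I <;> by_cases hbb : BddBelow I
  · -- bounded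
    set c := sInf I with hc
    set d := sSup I with hd
    set a₀ : ℝ := if c ∈ I then c - 1 else c with ha₀
    set b₀ : ℝ := if d ∈ I then d + 1 else d with hb₀
    have hmem : ∀ x ∈ I, a₀ < x ∧ x < b₀ := by
      intro x hx
      constructor
      · by_cases h : c ∈ I
        · rw [ha₀, if_pos h]
          have := csInf_le hbb hx
          linarith
        · rw [ha₀, if_neg h]
          rcases lt_or_eq_of_le (csInf_le hbb hx) with h1 | h1
          · exact h1
          · exact absurd (by rw [hc, h1]; exact hx : c ∈ I) h
      · by_cases h : d ∈ I
        · rw [hb₀, if_pos h]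
          have := le_csSup hba hx
          linarith
        · rw [hb₀, if_neg h]
          rcases lt_or_eq_of_le (le_csSup hba hx) with h1 | h1
          · exact h1
          · exact absurd (by rw [hd, ← h1]; exact hx : d ∈ I) h
    have hgood : Set.Ioo a₀ b₀ ∩ closure I ⊆ I := by
      rintro y ⟨hyIoo, hycl⟩
      have hIcc : I ⊆ Set.Icc c d := fun z hz => ⟨csInf_le hbb hz, le_csSup hba hz⟩
      have hyIcc : y ∈ Set.Icc c d := closure_minimal hIcc isClosed_Icc hycl
      rcases eq_or_lt_of_le hyIcc.1 with h1 | h1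
      · by_cases h : c ∈ I
        · exact h1 ▸ h
        · exfalso
          have hac : a₀ = c := by rw [ha₀, if_neg h]
          have := hyIoo.1
          rw [hac, ← h1] at this
          exact absurd this (lt_irrefl _)
      · rcases eq_or_lt_of_le hyIcc.2 with h2 | h2
        · by_cases h : d ∈ I
          · exact h2 ▸ h
          · exfalso
            have hbd : b₀ = d := by rw [hb₀, if_neg h]
            have := hyIoo.2
            rw [hbd, h2] at this
            exact absurd this (lt_irrefl _)
        · exact mem_of_between I hI (exists_lt_of_csInf_lt ⟨x₀, hx₀⟩ h1)
            (exists_lt_of_lt_csSup ⟨x₀, hx₀⟩ h2)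
    exact ⟨Unit, fun _ => a₀, fun _ => b₀,
      fun _ => (hmem x₀ hx₀).1.trans (hmem x₀ hx₀).2,
      fun K _ => Set.toFinite _,
      exists_epi_of_cover k I Unit _ _
        (fun x hx => ⟨(), ⟨(hmem x hx).1, (hmem x hx).2⟩, hgood⟩)⟩
  · -- bounded above, unbounded below
    set d := sSup I with hd
    set b' : ℝ := if d ∈ I then d + 1 else d with hb'
    have hmem : ∀ x ∈ I, x < b' := by
      intro x hx
      by_cases h : d ∈ I
      · rw [hb', if_pos h]
        have := le_csSup hba hx
        linarith
      · rw [hb', if_neg h]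
        rcases lt_or_eq_of_le (le_csSup hba hx) with h1 | h1
        · exact h1
        · exact absurd (by rw [hd, ← h1]; exact hx : d ∈ I) h
    have hp : ∀ y : ℝ, ∃ p ∈ I, p < y := by
      intro y
      by_contra h
      push_neg at h
      exact hbb ⟨y, fun z hz => h z hz⟩
    have hclI : closure I ⊆ Set.Iic d :=
      closure_minimal (fun z hz => le_csSup hba hz) isClosed_Iic
    have hgood : ∀ n : ℕ, Set.Ioo (b' - n - 2) (b' - n) ∩ closure I ⊆ I := by
      rintro n y ⟨hyIoo, hycl⟩
      rcases eq_or_lt_of_le (Set.mem_Iic.mp (hclI hycl)) with h1 | h1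
      · by_cases h : d ∈ I
        · exact h1 ▸ h
        · exfalso
          have hbd : b' = d := by rw [hb', if_neg h]
          have h2 := hyIoo.2
          have h3 : (0:ℝ) ≤ n := Nat.cast_nonneg n
          rw [hbd, h1] at h2
          linarith
      · exact mem_of_between I hI (hp y) (exists_lt_of_lt_csSup ⟨x₀, hx₀⟩ h1)
    have hcov : ∀ x ∈ I, ∃ n : ℕ, x ∈ Set.Ioo (b' - n - 2) (b' - n) ∧
        Set.Ioo (b' - (n:ℝ) - 2) (b' - n) ∩ closure I ⊆ I := by
      intro x hx
      have hax : x < b' := hmem x hx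
      by_cases hr : b' - x ≤ 1
      · exact ⟨0, ⟨by push_cast; linarith, by push_cast; linarith⟩, hgood 0⟩
      · refine ⟨⌊b' - x - 1⌋₊, ⟨?_, ?_⟩, hgood _⟩
        · have h2 : b' - x - 1 < ⌊b' - x - 1⌋₊ + 1 := Nat.lt_floor_add_one _
          linarith
        · have h1 : (⌊b' - x - 1⌋₊ : ℝ) ≤ b' - x - 1 := Nat.floor_le (by linarith)
          linarith
    refine ⟨ℕ, fun n => b' - n - 2, fun n => b' - n,
      fun n => by show b' - (n:ℝ) - 2 < b' - (n:ℝ); linarith, ?_,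
      exists_epi_of_cover k I ℕ _ _ hcov⟩
    intro K hK
    obtain ⟨l, hl⟩ := hK.bddBelow
    refine Set.Finite.subset (Set.finite_Iio ⌈b' - l⌉₊) ?_
    rintro n ⟨y, ⟨⟨-, hy2⟩, hyK⟩⟩
    have hyl : l ≤ y := hl hyK
    have hy2' : y < b' - (n:ℝ) := hy2
    exact Nat.lt_ceil.mpr (by linarith)
  · -- bounded below, unbounded above
    set c := sInf I with hc
    set a' : ℝ := if c ∈ I then c - 1 else c with ha'
    have hmem : ∀ x ∈ I, a' < x := by
      intro x hx
      by_cases h : c ∈ I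
      · rw [ha', if_pos h]
        have := csInf_le hbb hx
        linarith
      · rw [ha', if_neg h]
        rcases lt_or_eq_of_le (csInf_le hbb hx) with h1 | h1
        · exact h1
        · exact absurd (by rw [hc, h1]; exact hx : c ∈ I) h
    have hq : ∀ y : ℝ, ∃ q ∈ I, y < q := by
      intro y
      by_contra h
      push_neg at h
      exact hba ⟨y, fun z hz => h z hz⟩
    have hclI : closure I ⊆ Set.Ici c :=
      closure_minimal (fun z hz => csInf_le hbb hz) isClosed_Ici
    have hgood : ∀ n : ℕ, Set.Ioo (a' + n) (a' + n + 2) ∩ closure I ⊆ I := by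
      rintro n y ⟨hyIoo, hycl⟩
      rcases eq_or_lt_of_le (Set.mem_Ici.mp (hclI hycl)) with h1 | h1
      · by_cases h : c ∈ I
        · exact h1 ▸ h
        · exfalso
          have hac : a' = c := by rw [ha', if_neg h]
          have h2 := hyIoo.1
          have h3 : (0:ℝ) ≤ n := Nat.cast_nonneg n
          rw [hac, h1] at h2
          linarith
      · exact mem_of_between I hI (exists_lt_of_csInf_lt ⟨x₀, hx₀⟩ h1) (hq y)
    have hcov : ∀ x ∈ I, ∃ n : ℕ, x ∈ Set.Ioo (a' + n) (a' + n + 2) ∧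
        Set.Ioo (a' + (n:ℝ)) (a' + n + 2) ∩ closure I ⊆ I := by
      intro x hx
      have hax : a' < x := hmem x hx
      by_cases hr : x - a' ≤ 1
      · exact ⟨0, ⟨by push_cast; linarith, by push_cast; linarith⟩, hgood 0⟩
      · refine ⟨⌊x - a' - 1⌋₊, ⟨?_, ?_⟩, hgood _⟩
        · have h1 : (⌊x - a' - 1⌋₊ : ℝ) ≤ x - a' - 1 := Nat.floor_le (by linarith)
          linarith
        · have h2 : x - a' - 1 < ⌊x - a' - 1⌋₊ + 1 := Nat.lt_floor_add_one _
          linarith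
    refine ⟨ℕ, fun n => a' + n, fun n => a' + n + 2,
      fun n => by show a' + (n:ℝ) < a' + (n:ℝ) + 2; linarith, ?_,
      exists_epi_of_cover k I ℕ _ _ hcov⟩
    intro K hK
    obtain ⟨u, hu⟩ := hK.bddAbove
    refine Set.Finite.subset (Set.finite_Iio ⌈u - a'⌉₊) ?_
    rintro n ⟨y, ⟨⟨hy1, -⟩, hyK⟩⟩
    have hyu : y ≤ u := hu hyK
    have hy1' : a' + (n:ℝ) < y := hy1
    exact Nat.lt_ceil.mpr (by linarith)
  · -- unbounded both sides
    have hq : ∀ y : ℝ, ∃ q ∈ I, y < q := by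
      intro y
      by_contra h
      push_neg at h
      exact hba ⟨y, fun z hz => h z hz⟩
    have hp : ∀ y : ℝ, ∃ p ∈ I, p < y := by
      intro y
      by_contra h
      push_neg at h
      exact hbb ⟨y, fun z hz => h z hz⟩
    have hgood : ∀ n : ℤ, Set.Ioo ((n:ℝ) - 1) ((n:ℝ) + 1) ∩ closure I ⊆ I := by
      rintro n y ⟨-, -⟩
      exact mem_of_between I hI (hp y) (hq y)
    have hcov : ∀ x ∈ I, ∃ n : ℤ, x ∈ Set.Ioo ((n:ℝ) - 1) ((n:ℝ) + 1) ∧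
        Set.Ioo ((n:ℝ) - 1) ((n:ℝ) + 1) ∩ closure I ⊆ I := by
      intro x hx
      refine ⟨⌊x⌋, ⟨?_, ?_⟩, hgood _⟩
      · have := Int.floor_le x
        linarith
      · exact Int.lt_floor_add_one x
    refine ⟨ℤ, fun n => (n:ℝ) - 1, fun n => (n:ℝ) + 1,
      fun n => by show (n:ℝ) - 1 < (n:ℝ) + 1; linarith, ?_,
      exists_epi_of_cover k I ℤ _ _ hcov⟩
    intro K hK
    obtain ⟨u, hu⟩ := hK.bddAbove
    obtain ⟨l, hl⟩ := hK.bddBelow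
    refine Set.Finite.subset (Set.finite_Icc (⌈l - 1⌉) (⌊u + 1⌋)) ?_
    rintro n ⟨y, ⟨⟨hy1, hy2⟩, hyK⟩⟩
    have hyu : y ≤ u := hu hyK
    have hyl : l ≤ y := hl hyK
    have hy1' : (n:ℝ) - 1 < y := hy1
    have hy2' : y < (n:ℝ) + 1 := hy2
    refine ⟨Int.ceil_le.mpr (by push_cast; linarith), Int.le_floor.mpr (by push_cast; linarith)⟩

end
end
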